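/- Let (X,d,m) be a compact Ahlfors Q-regular space, let 1 < p < ∞ with 1/p + 1/p' = 1, and let 1/p' ≤ s < 1. There exists a constant Ψ = Ψ(X,p,s) ≥ 1 such that for all M ≥ 1 there exists a constant 1 < Ã < ∞, depending only on X, p, s and M, such that: for any countable family {B_d(x_k,r_k)}_{k∈F} of balls in X for which η*_{X,p}(x_k, M·r_k) is defined for every k and the family {B_d(x_k, Ψ·η*_{X,p}(x_k, M·r_k))}_{k∈F} is pairwise disjoint, and for any compact set E ⊆ X with E = ∪_k E_k and E_k ⊆ B_d(x_k,r_k) for all k, one has Σ_{k∈F} C_{K_{X,s},p}(E_k) ≤ Ã · C_{K_{X,s},p}(E). -/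

import Mathlib

noncomputable section

open MeasureTheory ENNReal NNReal

/-- The potential `K*f(x) = ∫ K(x,y) f(y) dm(y)` of a function `f` w.r.t. a kernel `K`. -/
def potential {X : Type*} [MeasurableSpace X] (m : Measure X)
    (K : X → X → ℝ) (f : X → ℝ) (x : X) : ℝ :=
  ∫ y, K x y * f y ∂m

/-- The `L^p` capacity of a set `E` associated to a kernel `K`:
`C_{K,p}(E) = inf { ‖f‖_p^p : f ∈ L^p, K*f ≥ 1 on E }`. -/
def capacity {X : Type*} [MeasurableSpace X] (m : Measure X)
    (K : X → X → ℝ) (p : ℝ) (E : Set X) : ℝ≥0∞ :=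
  ⨅ (f : X → ℝ) (_ : MemLp f (ENNReal.ofReal p) m ∧ ∀ x ∈ E, 1 ≤ potential m K f x),
    eLpNorm f (ENNReal.ofReal p) m ^ p

/-- The Riesz kernel `K_{X,s}(x,y) = d(x,y)^{-Qs}`. -/
def rieszKernel {X : Type*} [MetricSpace X] (Q s : ℝ) (x y : X) : ℝ :=
  dist x y ^ (-(Q * s))

/-- `(X,d,m)` is Ahlfors `Q`-regular: `c₁ r^Q ≤ m(B(x,r)) ≤ c₂ r^Q` for `0 < r < diam X`. -/
def IsAhlfors {X : Type*} [MetricSpace X] [MeasurableSpace X] (m : Measure X) (Q : ℝ) : Prop :=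
  ∃ c₁ c₂ : ℝ, 0 < c₁ ∧ c₁ ≤ c₂ ∧ ∀ (x : X) (r : ℝ), 0 < r →
    r < Metric.diam (Set.univ : Set X) →
    ENNReal.ofReal (c₁ * r ^ Q) ≤ m (Metric.ball x r) ∧
      m (Metric.ball x r) ≤ ENNReal.ofReal (c₂ * r ^ Q)

/-- The set appearing in the definition of the Aikawa–Borichev radius
`η_{X,p}(x,r)`: radii `R > 0` with `m(B(x,R)) ≥ C_{K_{X,s},p}(B(x,r))`. -/
def etaSet {X : Type*} [MetricSpace X] [MeasurableSpace X] (m : Measure X)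
    (Q s p : ℝ) (x : X) (r : ℝ) : Set ℝ :=
  {R : ℝ | 0 < R ∧ capacity m (rieszKernel Q s) p (Metric.ball x r) ≤ m (Metric.ball x R)}

/-- The Aikawa–Borichev radius `η*_{X,p}(x,r) = max (r, η_{X,p}(x,r))`. -/
def etaStar {X : Type*} [MetricSpace X] [MeasurableSpace X] (m : Measure X)
    (Q s p : ℝ) (x : X) (r : ℝ) : ℝ :=
  max r (sInf (etaSet m Q s p x r))

/-- The (unnormalized) dyadic Poisson kernel
`y^{-Q} Σ_k 2^{-(Q+1)k} χ_{B(x,2^k y)}(z)`. -/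
def poissonKernelX {X : Type*} [MetricSpace X] (Q : ℝ) (x : X) (y : ℝ) (z : X) : ℝ :=
  y ^ (-Q) * ∑' k : ℕ, (2 : ℝ) ^ (-((Q + 1) * (k : ℝ))) *
    (Metric.ball x (2 ^ k * y)).indicator (fun _ => (1 : ℝ)) z

/-- The dyadic Poisson integral `PI(g)(x,y)` on `X × (0,∞)`. -/
def PI {X : Type*} [MetricSpace X] [MeasurableSpace X] (m : Measure X) (Q : ℝ)
    (g : X → ℝ) (x : X) (y : ℝ) : ℝ :=
  (∫ z, poissonKernelX Q x y z ∂m)⁻¹ * ∫ z, poissonKernelX Q x y z * g z ∂m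

section Helpers

variable {X : Type*} [MetricSpace X] [MeasurableSpace X] {m : Measure X}

lemma capacity_le_of_admissible {K : X → X → ℝ} {p : ℝ} {E : Set X} {g : X → ℝ}
    (h : MemLp g (ENNReal.ofReal p) m ∧ ∀ x ∈ E, 1 ≤ potential m K g x) :
    capacity m K p E ≤ eLpNorm g (ENNReal.ofReal p) m ^ p :=
  iInf₂_le g h

lemma capacity_mono {K : X → X → ℝ} {p : ℝ} {E F : Set X} (h : E ⊆ F) :
    capacity m K p E ≤ capacity m K p F := by
  refine le_iInf fun f => le_iInf fun hf => ?_
  exact capacity_le_of_admissible ⟨hf.1, fun x hx => hf.2 x (h hx)⟩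

lemma capacity_empty {K : X → X → ℝ} {p : ℝ} (hp : 0 < p) :
    capacity m K p (∅ : Set X) = 0 := by
  refine le_antisymm ?_ (zero_le)
  have h := capacity_le_of_admissible (m := m) (K := K) (p := p) (E := (∅ : Set X))
    (g := (0 : X → ℝ)) ⟨MemLp.zero, fun x hx => absurd hx (Set.notMem_empty x)⟩
  simpa [eLpNorm_zero, ENNReal.zero_rpow_of_pos hp] using h

/-- Summing set-lintegrals over pairwise disjoint sets is at most the full lintegral. -/
lemma tsum_setLIntegral_le {ι : Type} [Countable ι] {B : ι → Set X}
    (hB : ∀ k, MeasurableSet (B k)) (hd : Pairwise (Function.onFun Disjoint B))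
    {h : X → ℝ≥0∞} (hh : AEMeasurable h m) :
    ∑' k, ∫⁻ y in B k, h y ∂m ≤ ∫⁻ y, h y ∂m := by
  have h1 : ∀ k, ∫⁻ y in B k, h y ∂m = ∫⁻ y, (B k).indicator h y ∂m :=
    fun k => (lintegral_indicator (hB k) h).symm
  calc ∑' k, ∫⁻ y in B k, h y ∂m
      = ∑' k, ∫⁻ y, (B k).indicator h y ∂m := tsum_congr h1
    _ = ∫⁻ y, ∑' k, (B k).indicator h y ∂m :=
        (lintegral_tsum fun k => hh.indicator (hB k)).symm
    _ ≤ ∫⁻ y, h y ∂m := by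
        refine lintegral_mono fun y => ?_
        by_cases hy : ∃ k, y ∈ B k
        · obtain ⟨k₀, hk₀⟩ := hy
          rw [tsum_eq_single k₀ fun j hj =>
            Set.indicator_of_notMem (fun hyj => Set.disjoint_left.mp (hd hj) hyj hk₀) h]
          rw [Set.indicator_of_mem hk₀]
        · push_neg at hy
          rw [ENNReal.tsum_eq_zero.mpr fun k => Set.indicator_of_notMem (hy k) h]
          exact zero_le

end Helpers

set_option maxHeartbeats 1600000 in
/-- **Quasi-additivity of the Riesz capacity on compact Ahlfors-regular spaces.**
There is `Ψ = Ψ(X,p,s) ≥ 1` such that for all `M ≥ 1` there is `1 < Ã < ∞` such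
that for any countable family of balls `B(x_k,r_k)` for which the radii
`η*_{X,p}(x_k,M r_k)` are defined and the balls `B(x_k, Ψ η*_{X,p}(x_k, M r_k))`
are pairwise disjoint, and any compact `E = ⋃_k E_k` with `E_k ⊆ B(x_k,r_k)`,
one has `Σ_k C_{K_{X,s},p}(E_k) ≤ Ã · C_{K_{X,s},p}(E)`. -/
theorem quasi_additivity_ahlfors
    {X : Type*} [MetricSpace X] [CompactSpace X] [MeasurableSpace X] [BorelSpace X]
    (m : Measure X) (Q : ℝ) (hQ : 0 < Q) (hAhl : IsAhlfors m Q)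
    (p p' s : ℝ) (hp : 1 < p) (hp' : 1 / p + 1 / p' = 1)
    (hs1 : 1 / p' ≤ s) (hs2 : s < 1) :
    ∃ Ψ : ℝ, 1 ≤ Ψ ∧ ∀ M : ℝ, 1 ≤ M →
      ∃ A : ℝ≥0∞, 1 < A ∧ A < ⊤ ∧
        ∀ (ι : Type) (_ : Countable ι) (c : ι → X) (r : ι → ℝ),
          (∀ k, (etaSet m Q s p (c k) (M * r k)).Nonempty) →
          (Pairwise fun k k' => Disjoint
              (Metric.ball (c k) (Ψ * etaStar m Q s p (c k) (M * r k)))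
              (Metric.ball (c k') (Ψ * etaStar m Q s p (c k') (M * r k')))) →
          ∀ E : ι → Set X, IsCompact (⋃ k, E k) →
            (∀ k, E k ⊆ Metric.ball (c k) (r k)) →
            ∑' k, capacity m (rieszKernel Q s) p (E k) ≤
              A * capacity m (rieszKernel Q s) p (⋃ k, E k) := by
  classical
  -- basic exponent facts
  have hp0 : (0 : ℝ) < p := lt_trans one_pos hp
  have hinvp1 : 1 / p < 1 := by rw [div_lt_one hp0]; exact hp
  have hinvp0 : 0 < 1 / p := by positivity
  have hinvp'0 : 0 < 1 / p' := by linarith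
  have hp'0 : 0 < p' := by
    rcases lt_trichotomy p' 0 with h | h | h
    · exact absurd (div_neg_of_pos_of_neg one_pos h) (by linarith)
    · rw [h] at hinvp'0; simp at hinvp'0
    · exact h
  have hp'1 : 1 < p' := by
    have h1 : 1 / p' < 1 := by linarith
    rw [div_lt_one hp'0] at h1; exact h1
  have hs0 : 0 < s := lt_of_lt_of_le hinvp'0 hs1
  set κ := Q * s with hκdef
  have hκ0 : 0 < κ := mul_pos hQ hs0
  have hκQ : κ < Q := by
    calc κ = Q * s := rfl
      _ < Q * 1 := mul_lt_mul_of_pos_left hs2 hQ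
      _ = Q := mul_one Q
  have hker_nonneg : ∀ x y : X, 0 ≤ rieszKernel Q s x y :=
    fun x y => Real.rpow_nonneg dist_nonneg _
  have hker_eq : ∀ x y : X, rieszKernel Q s x y = dist x y ^ (-κ) := fun x y => rfl
  have hrpow_anti : ∀ a b : ℝ, 0 < a → a ≤ b → b ^ (-κ) ≤ a ^ (-κ) := by
    intro a b ha hab
    rw [Real.rpow_neg ha.le, Real.rpow_neg (ha.trans_le hab).le]
    exact inv_anti₀ (Real.rpow_pos_of_pos ha κ) (Real.rpow_le_rpow ha.le hab hκ0.le)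
  refine ⟨2, one_le_two, ?_⟩
  intro M hM
  by_cases hX : Nontrivial X
  swap
  · -- degenerate case: `X` is a subsingleton, so the kernel vanishes identically
    have hXsub : Subsingleton X := not_nontrivial_iff_subsingleton.mp hX
    refine ⟨2, one_lt_two, by norm_num, ?_⟩
    intro ι hι c r hEta hDisj E hcomp hEsub
    by_cases hall : ∀ k, E k = ∅
    · have hz : ∀ k, capacity m (rieszKernel Q s) p (E k) = 0 := fun k => by
        rw [hall k]; exact capacity_empty hp0
      simp only [hz, tsum_zero]; exact zero_le
    · push_neg at hall
      obtain ⟨k₀, hk₀⟩ := hall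
      obtain ⟨x₀, hx₀⟩ := hk₀
      have hcap : capacity m (rieszKernel Q s) p (⋃ k, E k) = ⊤ := by
        rw [capacity, iInf_eq_top]; intro f
        rw [iInf_eq_top]; intro hf
        exfalso
        have h1 := hf.2 x₀ (Set.mem_iUnion.mpr ⟨k₀, hx₀⟩)
        have h0 : potential m (rieszKernel Q s) f x₀ = 0 := by
          have hz : ∀ y, rieszKernel Q s x₀ y = 0 := by
            intro y
            rw [rieszKernel, Subsingleton.elim x₀ y, dist_self,
              Real.zero_rpow (neg_ne_zero.mpr (mul_pos hQ hs0).ne')]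
          simp [potential, hz]
        rw [h0] at h1; linarith
      rw [hcap, ENNReal.mul_top (by norm_num)]
      exact le_top
  -- main case: `X` nontrivial
  obtain ⟨c₁, c₂, hc₁, hc₁₂, hAB⟩ := hAhl
  set D := Metric.diam (Set.univ : Set X) with hDdef
  have hD0 : 0 < D := by
    obtain ⟨x, y, hxy⟩ := hX
    calc (0 : ℝ) < dist x y := dist_pos.mpr hxy
      _ ≤ D := Metric.dist_le_diam_of_mem isCompact_univ.isBounded trivial trivial
  have hdistD : ∀ z w : X, dist z w ≤ D :=
    fun z w => Metric.dist_le_diam_of_mem isCompact_univ.isBounded trivial trivial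
  -- total mass is finite
  have hMX : m Set.univ < ⊤ := by
    obtain ⟨t, ht⟩ := isCompact_univ.elim_finite_subcover
      (fun x : X => Metric.ball x (D / 2)) (fun _ => Metric.isOpen_ball)
      (fun x _ => Set.mem_iUnion.mpr ⟨x, Metric.mem_ball_self (by positivity)⟩)
    calc m Set.univ ≤ m (⋃ x ∈ t, Metric.ball x (D / 2)) := measure_mono ht
      _ ≤ ∑ x ∈ t, m (Metric.ball x (D / 2)) := measure_biUnion_finset_le t _
      _ < ⊤ := ENNReal.sum_lt_top.mpr fun x _ =>
          lt_of_le_of_lt (hAB x (D / 2) (by positivity) (by linarith)).2 ENNReal.ofReal_lt_top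
  -- uniform upper Ahlfors bound for radii up to 2 * D
  set C₂' := c₂ + (m Set.univ).toReal * D ^ (-Q) with hC₂'def
  have hC₂c₂ : c₂ ≤ C₂' :=
    le_add_of_nonneg_right (mul_nonneg ENNReal.toReal_nonneg (Real.rpow_nonneg hD0.le _))
  have hC₂pos : 0 < C₂' := lt_of_lt_of_le (lt_of_lt_of_le hc₁ hc₁₂) hC₂c₂
  have hupper : ∀ (y : X) (ρ : ℝ), 0 < ρ → ρ ≤ 2 * D →
      m (Metric.ball y ρ) ≤ ENNReal.ofReal (C₂' * ρ ^ Q) := by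
    intro y ρ h0 h2
    rcases lt_or_ge ρ D with h | h
    · exact le_trans (hAB y ρ h0 h).2
        (ENNReal.ofReal_le_ofReal
          (mul_le_mul_of_nonneg_right hC₂c₂ (Real.rpow_nonneg h0.le _)))
    · have hDQpos : (0 : ℝ) < D ^ Q := Real.rpow_pos_of_pos hD0 Q
      have hρQpos : (0 : ℝ) < ρ ^ Q := Real.rpow_pos_of_pos h0 Q
      have hDQ : D ^ Q ≤ ρ ^ Q := Real.rpow_le_rpow hD0.le h hQ.le
      have hcancel : D ^ (-Q) * D ^ Q = 1 := by
        rw [Real.rpow_neg hD0.le]; exact inv_mul_cancel₀ hDQpos.ne'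
      have h1 : (m Set.univ).toReal ≤ C₂' * ρ ^ Q := by
        have ha : (0 : ℝ) ≤ (m Set.univ).toReal := ENNReal.toReal_nonneg
        have hDQn : (0 : ℝ) ≤ D ^ (-Q) := Real.rpow_nonneg hD0.le _
        have hc₂ρ : (0 : ℝ) ≤ c₂ * ρ ^ Q :=
          mul_nonneg (le_trans hc₁.le hc₁₂) hρQpos.le
        calc (m Set.univ).toReal = (m Set.univ).toReal * (D ^ (-Q) * D ^ Q) := by
              rw [hcancel, mul_one]
          _ = (m Set.univ).toReal * D ^ (-Q) * D ^ Q := by ring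
          _ ≤ (m Set.univ).toReal * D ^ (-Q) * ρ ^ Q :=
              mul_le_mul_of_nonneg_left hDQ (mul_nonneg ha hDQn)
          _ ≤ C₂' * ρ ^ Q := by
              rw [hC₂'def]; nlinarith
      calc m (Metric.ball y ρ) ≤ m Set.univ := measure_mono (Set.subset_univ _)
        _ = ENNReal.ofReal ((m Set.univ).toReal) := (ENNReal.ofReal_toReal hMX.ne).symm
        _ ≤ ENNReal.ofReal (C₂' * ρ ^ Q) := ENNReal.ofReal_le_ofReal h1
  -- kernel measurability
  have hkermeas : ∀ x : X, Measurable fun y : X => dist x y ^ (-κ) := by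
    intro x
    have h1 : Continuous fun y : X => dist x y ^ κ :=
      (continuous_const.dist continuous_id).rpow_const fun y => Or.inr hκ0.le
    have h2 : (fun y : X => dist x y ^ (-κ)) = fun y => (dist x y ^ κ)⁻¹ :=
      funext fun y => Real.rpow_neg dist_nonneg κ
    rw [h2]; exact h1.measurable.inv
  have hkermeas' : ∀ y : X, Measurable fun z : X => dist z y ^ (-κ) := by
    intro y
    have h2 : (fun z : X => dist z y ^ (-κ)) = fun z => dist y z ^ (-κ) :=
      funext fun z => by rw [dist_comm]
    rw [h2]; exact hkermeas y
  -- uniform bound on the kernel integral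
  obtain ⟨Cw, hCwlt, hCw⟩ : ∃ Cw : ℝ≥0∞, Cw < ⊤ ∧
      ∀ x : X, ∫⁻ y, ENNReal.ofReal (dist x y ^ (-κ)) ∂m ≤ Cw := by
    set ρ : ℕ → ℝ := fun j => 2 * D * (2⁻¹ : ℝ) ^ j with hρdef
    have hρpos : ∀ j, 0 < ρ j := fun j => by positivity
    have hρle : ∀ j, ρ j ≤ 2 * D := by
      intro j
      have h1 : (2⁻¹ : ℝ) ^ j ≤ 1 := pow_le_one₀ (by norm_num) (by norm_num)
      calc ρ j = 2 * D * (2⁻¹ : ℝ) ^ j := rfl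
        _ ≤ 2 * D * 1 := by nlinarith
        _ = 2 * D := mul_one _
    refine ⟨∑' j : ℕ, ENNReal.ofReal ((ρ j / 4) ^ (-κ) * (C₂' * ρ j ^ Q)), ?_, ?_⟩
    · -- finiteness via geometric series
      set qq := ((2 : ℝ)⁻¹) ^ (Q - κ) with hqqdef
      have hqq0 : 0 < qq := Real.rpow_pos_of_pos (by norm_num) _
      have hqq1 : qq < 1 := Real.rpow_lt_one (by norm_num) (by norm_num) (by linarith)
      set β := (4 : ℝ) ^ κ * C₂' * (2 * D) ^ (Q - κ) with hβdef
      have hβ0 : 0 ≤ β := by positivity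
      have hterm : ∀ j : ℕ, (ρ j / 4) ^ (-κ) * (C₂' * ρ j ^ Q) = β * qq ^ j := by
        intro j
        have hρj := hρpos j
        have e1 : (ρ j / 4) ^ (-κ) = ρ j ^ (-κ) * (4 : ℝ) ^ κ := by
          rw [div_eq_mul_inv, Real.mul_rpow hρj.le (by norm_num),
            Real.inv_rpow (by norm_num : (0:ℝ) ≤ 4), Real.rpow_neg (by norm_num : (0:ℝ) ≤ 4),
            inv_inv]
        have e2 : ρ j ^ (-κ) * ρ j ^ Q = ρ j ^ (Q - κ) := by
          rw [← Real.rpow_add hρj, neg_add_eq_sub]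
        have e3 : ρ j ^ (Q - κ) = (2 * D) ^ (Q - κ) * qq ^ j := by
          show (2 * D * (2⁻¹:ℝ) ^ j) ^ (Q - κ) = (2 * D) ^ (Q - κ) * qq ^ j
          rw [Real.mul_rpow (by positivity) (by positivity)]
          congr 1
          rw [← Real.rpow_natCast (2⁻¹ : ℝ) j, ← Real.rpow_mul (by norm_num : (0:ℝ) ≤ 2⁻¹),
            mul_comm (j : ℝ) (Q - κ), Real.rpow_mul (by norm_num : (0:ℝ) ≤ 2⁻¹),
            Real.rpow_natCast]
        calc (ρ j / 4) ^ (-κ) * (C₂' * ρ j ^ Q)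
            = (4:ℝ) ^ κ * C₂' * (ρ j ^ (-κ) * ρ j ^ Q) := by rw [e1]; ring
          _ = (4:ℝ) ^ κ * C₂' * ((2 * D) ^ (Q - κ) * qq ^ j) := by rw [e2, e3]
          _ = β * qq ^ j := by rw [hβdef]; ring
      calc ∑' j : ℕ, ENNReal.ofReal ((ρ j / 4) ^ (-κ) * (C₂' * ρ j ^ Q))
          = ∑' j : ℕ, ENNReal.ofReal β * ENNReal.ofReal qq ^ j := by
            refine tsum_congr fun j => ?_
            rw [hterm j, ENNReal.ofReal_mul hβ0, ENNReal.ofReal_pow hqq0.le]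
        _ = ENNReal.ofReal β * ∑' j : ℕ, ENNReal.ofReal qq ^ j := ENNReal.tsum_mul_left
        _ < ⊤ := by
            rw [ENNReal.tsum_geometric]
            refine ENNReal.mul_lt_top ENNReal.ofReal_lt_top ?_
            have hlt1 : ENNReal.ofReal qq < 1 := ENNReal.ofReal_lt_one.mpr hqq1
            have h1 : (0 : ℝ≥0∞) < 1 - ENNReal.ofReal qq := by
              rw [tsub_pos_iff_lt]; exact hlt1
            exact ENNReal.inv_lt_top.mpr h1
    · intro x
      have hpt : ∀ y : X, ENNReal.ofReal (dist x y ^ (-κ)) ≤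
          ∑' j : ℕ, (Metric.ball x (ρ j)).indicator
            (fun _ => ENNReal.ofReal ((ρ j / 4) ^ (-κ))) y := by
        intro y
        rcases eq_or_lt_of_le (dist_nonneg : 0 ≤ dist x y) with h0 | h0
        · rw [← h0, Real.zero_rpow (neg_ne_zero.mpr hκ0.ne')]
          simp
        · have hdD : dist x y ≤ D := hdistD x y
          have hex : ∃ n : ℕ, ρ n ≤ dist x y := by
            obtain ⟨n, hn⟩ := pow_unbounded_of_one_lt (2 * D / dist x y) (one_lt_two (α := ℝ))
            refine ⟨n, ?_⟩
            have h2n : (0:ℝ) < (2:ℝ) ^ n := by positivity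
            rw [div_lt_iff₀ h0] at hn
            show 2 * D * (2⁻¹:ℝ) ^ n ≤ dist x y
            rw [inv_pow, mul_inv_le_iff₀ h2n]
            nlinarith
          set n₀ := Nat.find hex with hn₀def
          have hspec : ρ n₀ ≤ dist x y := Nat.find_spec hex
          have hn₀0 : n₀ ≠ 0 := by
            intro h
            rw [h] at hspec
            have hρ0 : ρ 0 = 2 * D := by simp [hρdef]
            rw [hρ0] at hspec; linarith
          set j := n₀ - 1 with hjdef
          have hjlt : j < n₀ := Nat.sub_lt (Nat.pos_of_ne_zero hn₀0) one_pos
          have h1 : dist x y < ρ j := not_le.mp (Nat.find_min hex hjlt)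
          have hsucc : j + 1 = n₀ := Nat.succ_pred_eq_of_pos (Nat.pos_of_ne_zero hn₀0)
          have h2 : ρ j / 2 ≤ dist x y := by
            have hstep : ρ (j+1) = ρ j / 2 := by
              show 2 * D * (2⁻¹:ℝ) ^ (j+1) = 2 * D * (2⁻¹:ℝ) ^ j / 2
              rw [pow_succ]; ring
            rw [← hsucc] at hspec
            rw [hstep] at hspec; exact hspec
          have h4 : ρ j / 4 ≤ dist x y := by
            have := hρpos j; linarith
          refine le_trans ?_ (ENNReal.le_tsum j)
          rw [Set.indicator_of_mem (Metric.mem_ball.mpr (by rw [dist_comm]; exact h1))]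
          exact ENNReal.ofReal_le_ofReal (hrpow_anti _ _ (by positivity) h4)
      calc ∫⁻ y, ENNReal.ofReal (dist x y ^ (-κ)) ∂m
          ≤ ∫⁻ y, ∑' j : ℕ, (Metric.ball x (ρ j)).indicator
              (fun _ => ENNReal.ofReal ((ρ j / 4) ^ (-κ))) y ∂m := lintegral_mono hpt
        _ = ∑' j : ℕ, ∫⁻ y, (Metric.ball x (ρ j)).indicator
              (fun _ => ENNReal.ofReal ((ρ j / 4) ^ (-κ))) y ∂m :=
            lintegral_tsum fun j => (measurable_const.indicator measurableSet_ball).aemeasurable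
        _ = ∑' j : ℕ, ENNReal.ofReal ((ρ j / 4) ^ (-κ)) * m (Metric.ball x (ρ j)) :=
            tsum_congr fun j => lintegral_indicator_const measurableSet_ball _
        _ ≤ ∑' j : ℕ, ENNReal.ofReal ((ρ j / 4) ^ (-κ)) * ENNReal.ofReal (C₂' * ρ j ^ Q) :=
            ENNReal.tsum_le_tsum fun j => mul_le_mul_right (hupper x (ρ j) (hρpos j) (hρle j)) _
        _ = ∑' j : ℕ, ENNReal.ofReal ((ρ j / 4) ^ (-κ) * (C₂' * ρ j ^ Q)) :=
            tsum_congr fun j => (ENNReal.ofReal_mul (Real.rpow_nonneg (by positivity) _)).symm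
  have hCw' : ∀ y : X, ∫⁻ z, ENNReal.ofReal (dist z y ^ (-κ)) ∂m ≤ Cw := by
    intro y
    refine le_trans (le_of_eq (lintegral_congr fun z => by rw [dist_comm])) (hCw y)
  -- constants
  set θ : ℝ≥0∞ := ENNReal.ofReal (1/2) with hθdef
  have hθ0 : θ ≠ 0 := by
    rw [hθdef, Ne, ENNReal.ofReal_eq_zero]; norm_num
  have hθtop : θ ≠ ⊤ := ENNReal.ofReal_ne_top
  set CG : ℝ≥0∞ := ENNReal.ofReal ((3/2 : ℝ) ^ κ / c₁) * Cw with hCGdef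
  have hCGtop : CG ≠ ⊤ := ENNReal.mul_ne_top ENNReal.ofReal_ne_top hCwlt.ne
  set KK : ℝ≥0∞ := CG ^ (p' - 1) * Cw with hKKdef
  have hKKtop : KK ≠ ⊤ :=
    ENNReal.mul_ne_top (ENNReal.rpow_lt_top_of_nonneg (by linarith) hCGtop).ne hCwlt.ne
  set c₃ : ℝ≥0∞ := θ⁻¹ * ENNReal.ofReal (2 ^ κ) with hc₃def
  have hc₃top : c₃ ≠ ⊤ := by
    refine ENNReal.mul_ne_top ?_ ENNReal.ofReal_ne_top
    rw [Ne, ENNReal.inv_eq_top]; exact hθ0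
  set CS : ℝ≥0∞ := (c₃ * KK ^ (1/p')) ^ p with hCSdef
  have hCStop : CS ≠ ⊤ := by
    refine (ENNReal.rpow_lt_top_of_nonneg hp0.le ?_).ne
    exact ENNReal.mul_ne_top hc₃top (ENNReal.rpow_lt_top_of_nonneg (by positivity) hKKtop).ne
  set A₀ : ℝ≥0∞ := ENNReal.ofReal 2 ^ p + ENNReal.ofReal (C₂' * 2 ^ Q) * CS with hA₀def
  have hA₀top : A₀ ≠ ⊤ := by
    rw [hA₀def]
    refine ENNReal.add_ne_top.mpr
      ⟨(ENNReal.rpow_lt_top_of_nonneg hp0.le ENNReal.ofReal_ne_top).ne, ?_⟩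
    exact ENNReal.mul_ne_top ENNReal.ofReal_ne_top hCStop
  have hAne : (A₀ + 2) ≠ ⊤ := ENNReal.add_ne_top.mpr ⟨hA₀top, by norm_num⟩
  have hA0 : (A₀ + 2) ≠ 0 := by
    refine ne_of_gt (lt_of_lt_of_le ?_ le_add_self)
    norm_num
  have hA1 : (1 : ℝ≥0∞) ≤ A₀ + 2 := le_trans (by norm_num) (le_add_self : (2:ℝ≥0∞) ≤ A₀ + 2)
  refine ⟨A₀ + 2, lt_of_lt_of_le one_lt_two (le_add_self : (2:ℝ≥0∞) ≤ A₀ + 2),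
    lt_top_iff_ne_top.mpr hAne, ?_⟩
  intro ι hι c r hEta hDisj E hcomp hEsub
  haveI : Countable ι := hι
  set η : ι → ℝ := fun k => etaStar m Q s p (c k) (M * r k) with hηdef
  have hη0 : ∀ k, 0 ≤ η k := by
    intro k
    refine le_trans ?_ (le_max_right _ _)
    exact le_csInf (hEta k) fun R hR => hR.1.le
  have hη_ge : ∀ k, M * r k ≤ η k := fun k => le_max_left _ _
  have hη_sInf : ∀ k, sInf (etaSet m Q s p (c k) (M * r k)) ≤ η k := fun k => le_max_right _ _
  have hT : ∀ k, 0 < r k → 0 < η k := by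
    intro k hk
    calc (0:ℝ) < M * r k := mul_pos (by linarith) hk
      _ ≤ η k := hη_ge k
  have hrη : ∀ k, 0 < r k → r k ≤ η k := by
    intro k hk
    calc r k = 1 * r k := (one_mul _).symm
      _ ≤ M * r k := mul_le_mul_of_nonneg_right hM hk.le
      _ ≤ η k := hη_ge k
  have hrpos_of_ne : ∀ k, (E k).Nonempty → 0 < r k := by
    rintro k ⟨x, hx⟩
    exact lt_of_le_of_lt dist_nonneg (Metric.mem_ball.mp (hEsub k hx))
  set Bb : ι → Set X := fun k => Metric.ball (c k) (2 * η k) with hBbdef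
  set Bs : ι → Set X := fun k => Metric.ball (c k) (η k) with hBsdef
  have hBsBb : ∀ k, Bs k ⊆ Bb k := fun k => Metric.ball_subset_ball (by linarith [hη0 k])
  have hdisjBb : Pairwise (Function.onFun Disjoint Bb) := fun k k' h => hDisj h
  have hdisjBs : Pairwise (Function.onFun Disjoint Bs) :=
    fun k k' h => (hdisjBb h).mono (hBsBb k) (hBsBb k')
  have hcapm : ∀ k, 0 < r k → capacity m (rieszKernel Q s) p (E k) ≤ m (Bb k) := by
    intro k hk
    have hsub1 : E k ⊆ Metric.ball (c k) (M * r k) :=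
      (hEsub k).trans (Metric.ball_subset_ball (by nlinarith))
    have h1 : capacity m (rieszKernel Q s) p (E k) ≤
        capacity m (rieszKernel Q s) p (Metric.ball (c k) (M * r k)) := capacity_mono hsub1
    have hlt : sInf (etaSet m Q s p (c k) (M * r k)) < 2 * η k :=
      lt_of_le_of_lt (hη_sInf k) (by linarith [hT k hk])
    obtain ⟨a, ha, halt⟩ := (csInf_lt_iff ⟨0, fun R hR => hR.1.le⟩ (hEta k)).mp hlt
    exact h1.trans (ha.2.trans (measure_mono (Metric.ball_subset_ball halt.le)))
  by_cases hbig : ∃ k, 0 < r k ∧ D < 2 * η k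
  · -- one huge ball: all other pieces are empty
    obtain ⟨k₀, hk₀r, hk₀D⟩ := hbig
    have honly : ∀ k, k ≠ k₀ → E k = ∅ := by
      intro k hk
      by_contra h
      have hrk : 0 < r k := hrpos_of_ne k (Set.nonempty_iff_ne_empty.mpr h)
      have huniv : Bb k₀ = Set.univ :=
        Set.eq_univ_of_forall fun z =>
          Metric.mem_ball.mpr (lt_of_le_of_lt (hdistD z (c k₀)) hk₀D)
      have hd : Disjoint (Bb k) (Bb k₀) := hdisjBb hk
      rw [huniv] at hd
      have hempty : Bb k = ∅ := Set.disjoint_univ.mp hd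
      have hc : c k ∈ Bb k := Metric.mem_ball_self (by linarith [hT k hrk])
      rw [hempty] at hc
      exact hc
    calc ∑' k, capacity m (rieszKernel Q s) p (E k)
        = capacity m (rieszKernel Q s) p (E k₀) := tsum_eq_single k₀ fun k hk => by
          rw [honly k hk]; exact capacity_empty hp0
      _ ≤ capacity m (rieszKernel Q s) p (⋃ k, E k) := capacity_mono (Set.subset_iUnion E k₀)
      _ ≤ (A₀ + 2) * capacity m (rieszKernel Q s) p (⋃ k, E k) :=
          le_mul_of_one_le_left (zero_le) hA1
  · -- all relevant balls have radius at most D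
    push_neg at hbig
    have hηD : ∀ k, 0 < r k → 2 * η k ≤ D := hbig
    -- the main estimate
    have main : ∀ b : ℝ≥0∞, capacity m (rieszKernel Q s) p (⋃ k, E k) < b → b ≠ ⊤ →
        ∑' k, capacity m (rieszKernel Q s) p (E k) ≤ A₀ * b := by
      intro b hb hbt
      rw [capacity] at hb
      obtain ⟨f₀, hf₀⟩ := iInf_lt_iff.mp hb
      obtain ⟨hadm₀, hval₀⟩ := iInf_lt_iff.mp hf₀
      set f : X → ℝ := fun y => |f₀ y| with hfdef
      have hf_nonneg : ∀ y, 0 ≤ f y := fun y => abs_nonneg _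
      have hfmem : MemLp f (ENNReal.ofReal p) m := by
        have h := hadm₀.1.norm
        simpa [Real.norm_eq_abs] using h
      have hIntf₀ : ∀ x, x ∈ (⋃ k, E k) →
          Integrable (fun y => rieszKernel Q s x y * f₀ y) m := by
        intro x hx
        by_contra h
        have h1 := hadm₀.2 x hx
        rw [potential, integral_undef h] at h1
        linarith
      have habs : ∀ x : X, (fun y => rieszKernel Q s x y * f y)
          = fun y => |rieszKernel Q s x y * f₀ y| := by
        intro x
        funext y
        rw [hfdef, abs_mul, abs_of_nonneg (hker_nonneg x y)]
      have hIntf : ∀ x, x ∈ (⋃ k, E k) →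
          Integrable (fun y => rieszKernel Q s x y * f y) m := by
        intro x hx
        rw [habs x]
        exact (hIntf₀ x hx).abs
      have hadm : ∀ x, x ∈ (⋃ k, E k) → 1 ≤ potential m (rieszKernel Q s) f x := by
        intro x hx
        refine le_trans (hadm₀.2 x hx) ?_
        refine integral_mono (hIntf₀ x hx) (hIntf x hx) fun y => ?_
        exact mul_le_mul_of_nonneg_left (le_abs_self _) (hker_nonneg x y)
      set F : X → ℝ≥0∞ := fun y => ENNReal.ofReal (f y) with hFdef
      have hF_aem : AEMeasurable F m :=
        hfmem.aestronglyMeasurable.aemeasurable.ennreal_ofReal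
      set Np := ∫⁻ y, F y ^ p ∂m with hNpdef
      have hofp_ne : (ENNReal.ofReal p) ≠ 0 := by
        rw [Ne, ENNReal.ofReal_eq_zero]; linarith
      have hofp_top : (ENNReal.ofReal p) ≠ ⊤ := ENNReal.ofReal_ne_top
      have heLp : ∀ g : X → ℝ, eLpNorm g (ENNReal.ofReal p) m ^ p
          = ∫⁻ y, (‖g y‖₊ : ℝ≥0∞) ^ p ∂m := by
        intro g
        rw [eLpNorm_eq_lintegral_rpow_enorm_toReal hofp_ne hofp_top,
          ENNReal.toReal_ofReal hp0.le, ← ENNReal.rpow_mul, one_div_mul_cancel hp0.ne',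
          ENNReal.rpow_one]
        rfl
      have hNp_lt : Np < b := by
        have he : eLpNorm f₀ (ENNReal.ofReal p) m ^ p = Np := by
          rw [← eLpNorm_norm f₀, heLp, hNpdef]
          refine lintegral_congr fun y => ?_
          congr 1
          rw [nnnorm_norm, ← enorm_eq_nnnorm, ← ofReal_norm, Real.norm_eq_abs]
        rw [← he]; exact hval₀
      -- good/bad dichotomy
      set tailL : X → ι → ℝ≥0∞ := fun x k =>
        ∫⁻ y in (Bb k)ᶜ, ENNReal.ofReal (rieszKernel Q s x y * f y) ∂m with htailLdef
      set good : ι → Prop := fun k => ∀ x ∈ E k, tailL x k ≤ θ with hgooddef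
      -- the good bound
      have hgood : ∀ k, good k → capacity m (rieszKernel Q s) p (E k) ≤
          ENNReal.ofReal 2 ^ p * ∫⁻ y in Bb k, F y ^ p ∂m := by
        intro k hkgood
        set g : X → ℝ := (Bb k).indicator (fun y => 2 * f y) with hgdef
        have hmemg : MemLp g (ENNReal.ofReal p) m :=
          (hfmem.const_mul 2).indicator measurableSet_ball
        have hpot : ∀ x ∈ E k, 1 ≤ potential m (rieszKernel Q s) g x := by
          intro x hx
          have hxU : x ∈ ⋃ k, E k := Set.mem_iUnion.mpr ⟨k, hx⟩
          have hIx : Integrable (fun y => rieszKernel Q s x y * f y) m := hIntf x hxU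
          have h1 : 1 ≤ ∫ y, rieszKernel Q s x y * f y ∂m := hadm x hxU
          have htail : ∫ y in (Bb k)ᶜ, rieszKernel Q s x y * f y ∂m ≤ 1/2 := by
            have hnn : 0 ≤ᵐ[m.restrict (Bb k)ᶜ] fun y => rieszKernel Q s x y * f y :=
              Filter.Eventually.of_forall fun y => mul_nonneg (hker_nonneg x y) (hf_nonneg y)
            rw [integral_eq_lintegral_of_nonneg_ae hnn hIx.aestronglyMeasurable.restrict]
            have hle : tailL x k ≤ θ := hkgood x hx
            calc (∫⁻ y in (Bb k)ᶜ, ENNReal.ofReal (rieszKernel Q s x y * f y) ∂m).toReal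
                ≤ θ.toReal := ENNReal.toReal_mono hθtop hle
              _ = 1/2 := by rw [hθdef, ENNReal.toReal_ofReal (by norm_num)]
          have hsplit : (∫ y in Bb k, rieszKernel Q s x y * f y ∂m)
              + ∫ y in (Bb k)ᶜ, rieszKernel Q s x y * f y ∂m
              = ∫ y, rieszKernel Q s x y * f y ∂m :=
            integral_add_compl measurableSet_ball hIx
          have hmain2 : 1/2 ≤ ∫ y in Bb k, rieszKernel Q s x y * f y ∂m := by linarith
          have hrw : potential m (rieszKernel Q s) g x
              = 2 * ∫ y in Bb k, rieszKernel Q s x y * f y ∂m := by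
            rw [potential]
            have hfe : (fun y => rieszKernel Q s x y * g y)
                = (Bb k).indicator (fun y => 2 * (rieszKernel Q s x y * f y)) := by
              funext y
              by_cases hy : y ∈ Bb k
              · rw [hgdef]
                simp only [Set.indicator_of_mem hy]
                ring
              · simp only [hgdef, Set.indicator_of_notMem hy, mul_zero]
            rw [hfe, integral_indicator measurableSet_ball, integral_const_mul]
          rw [hrw]; linarith
        refine le_trans (capacity_le_of_admissible ⟨hmemg, hpot⟩) ?_
        rw [heLp g]
        have hptw : ∀ y, (‖g y‖₊ : ℝ≥0∞) ^ p
            = (Bb k).indicator (fun y => ENNReal.ofReal 2 ^ p * F y ^ p) y := by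
          intro y
          by_cases hy : y ∈ Bb k
          · rw [hgdef]
            simp only [Set.indicator_of_mem hy]
            rw [← enorm_eq_nnnorm, ← ofReal_norm,
              Real.norm_of_nonneg (by positivity : (0:ℝ) ≤ 2 * f y),
              ENNReal.ofReal_mul (by norm_num : (0:ℝ) ≤ 2),
              ENNReal.mul_rpow_of_nonneg _ _ hp0.le]
          · simp only [hgdef, Set.indicator_of_notMem hy, nnnorm_zero, ENNReal.coe_zero,
              ENNReal.zero_rpow_of_pos hp0]
        rw [lintegral_congr hptw, lintegral_indicator measurableSet_ball,
          lintegral_const_mul' _ _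
            (ENNReal.rpow_lt_top_of_nonneg hp0.le ENNReal.ofReal_ne_top).ne]
      -- bad data
      have hbadr : ∀ k, ¬ good k → 0 < r k := by
        intro k hk
        have hk2 : ¬ ∀ x ∈ E k, tailL x k ≤ θ := hk
        push_neg at hk2
        obtain ⟨x, hx, _⟩ := hk2
        exact hrpos_of_ne k ⟨x, hx⟩
      set gt' : ι → X → ℝ≥0∞ := fun k =>
        (Bb k)ᶜ.indicator (fun y => ENNReal.ofReal (dist (c k) y ^ (-κ))) with hgt'def
      have hgt'meas : ∀ k, Measurable (gt' k) := fun k =>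
        ((hkermeas (c k)).ennreal_ofReal).indicator measurableSet_ball.compl
      have hbadTk : ∀ k, ¬ good k →
          θ ≤ ENNReal.ofReal (2 ^ κ) * ∫⁻ y, gt' k y * F y ∂m := by
        intro k hk
        have hrk : 0 < r k := hbadr k hk
        have hηk : 0 < η k := hT k hrk
        have hk2 : ¬ ∀ x ∈ E k, tailL x k ≤ θ := hk
        push_neg at hk2
        obtain ⟨x, hx, hxgt⟩ := hk2
        refine le_trans (le_of_lt hxgt) ?_
        have hdx : dist x (c k) < r k := Metric.mem_ball.mp (hEsub k hx)
        have hbound : tailL x k ≤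
            ∫⁻ y, ENNReal.ofReal (2 ^ κ) * (gt' k y * F y) ∂m := by
          show (∫⁻ y in (Bb k)ᶜ, ENNReal.ofReal (rieszKernel Q s x y * f y) ∂m) ≤ _
          rw [← lintegral_indicator measurableSet_ball.compl]
          refine lintegral_mono fun y => ?_
          by_cases hy : y ∈ (Bb k)ᶜ
          · rw [Set.indicator_of_mem hy, hgt'def]
            simp only [Set.indicator_of_mem hy]
            have hd : 2 * η k ≤ dist (c k) y := by
              rw [dist_comm]
              exact not_lt.mp fun hlt => hy (Metric.mem_ball.mpr hlt)
            have hd0 : 0 < dist (c k) y := lt_of_lt_of_le (by linarith) hd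
            have hxy : dist (c k) y / 2 ≤ dist x y := by
              have htri : dist (c k) y ≤ dist (c k) x + dist x y := dist_triangle _ _ _
              have hcx : dist (c k) x < η k := by
                rw [dist_comm]; exact lt_of_lt_of_le hdx (hrη k hrk)
              linarith
            have hker2 : rieszKernel Q s x y ≤ 2 ^ κ * dist (c k) y ^ (-κ) := by
              rw [hker_eq]
              have h1 : dist x y ^ (-κ) ≤ (dist (c k) y / 2) ^ (-κ) :=
                hrpow_anti _ _ (by positivity) hxy
              have h2 : (dist (c k) y / 2) ^ (-κ) = 2 ^ κ * dist (c k) y ^ (-κ) := by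
                rw [div_eq_mul_inv, Real.mul_rpow hd0.le (by norm_num),
                  Real.inv_rpow (by norm_num : (0:ℝ) ≤ 2),
                  Real.rpow_neg (by norm_num : (0:ℝ) ≤ 2), inv_inv, mul_comm]
              rw [h2] at h1; exact h1
            calc ENNReal.ofReal (rieszKernel Q s x y * f y)
                = ENNReal.ofReal (rieszKernel Q s x y) * F y :=
                  ENNReal.ofReal_mul (hker_nonneg x y)
              _ ≤ ENNReal.ofReal (2 ^ κ * dist (c k) y ^ (-κ)) * F y :=
                  mul_le_mul_left (ENNReal.ofReal_le_ofReal hker2) _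
              _ = ENNReal.ofReal (2 ^ κ) *
                  (ENNReal.ofReal (dist (c k) y ^ (-κ)) * F y) := by
                  rw [ENNReal.ofReal_mul (by positivity : (0:ℝ) ≤ 2 ^ κ), mul_assoc]
          · rw [Set.indicator_of_notMem hy, hgt'def]
            simp only [Set.indicator_of_notMem hy, zero_mul, mul_zero]
            exact zero_le
        refine hbound.trans (le_of_eq ?_)
        exact lintegral_const_mul' _ _ ENNReal.ofReal_ne_top
      -- weights
      set w : ι → ℝ≥0∞ := fun k => ENNReal.ofReal (η k ^ Q) with hwdef
      set u : ι → ℝ≥0∞ := fun k => if good k then 0 else w k with hudef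
      have hutop : ∀ k, u k ≠ ⊤ := by
        intro k
        rw [hudef]
        dsimp only
        split_ifs
        · exact ENNReal.zero_ne_top
        · exact ENNReal.ofReal_ne_top
      set S := ∑' k, u k with hSdef
      set G : X → ℝ≥0∞ := fun y => ∑' k, u k * gt' k y with hGdef
      have hGmeas : Measurable G :=
        Measurable.ennreal_tsum fun k => (hgt'meas k).const_mul (u k)
      -- pointwise bound on G
      have hGle : ∀ y, G y ≤ CG := by
        intro y
        have hterm : ∀ k, u k * gt' k y ≤ ENNReal.ofReal ((3/2 : ℝ) ^ κ / c₁) *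
            ∫⁻ z in Bs k, ENNReal.ofReal (dist z y ^ (-κ)) ∂m := by
          intro k
          by_cases hgk : good k
          · rw [hudef]; simp only [if_pos hgk, zero_mul]; exact zero_le
          · have hrk : 0 < r k := hbadr k hgk
            have hηk := hT k hrk
            rw [hudef]; simp only [if_neg hgk]
            by_cases hy : y ∈ (Bb k)ᶜ
            swap
            · rw [hgt'def]; simp only [Set.indicator_of_notMem hy, mul_zero]
              exact zero_le
            · rw [hgt'def]; simp only [Set.indicator_of_mem hy]
              have hd : 2 * η k ≤ dist (c k) y := by
                rw [dist_comm]
                exact not_lt.mp fun hlt => hy (Metric.mem_ball.mpr hlt)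
              have hd0 : 0 < dist (c k) y := lt_of_lt_of_le (by linarith) hd
              have hlow : ENNReal.ofReal ((3/2 * dist (c k) y) ^ (-κ)) * m (Bs k) ≤
                  ∫⁻ z in Bs k, ENNReal.ofReal (dist z y ^ (-κ)) ∂m := by
                rw [← setLIntegral_const (μ := m) (Bs k)
                  (ENNReal.ofReal ((3/2 * dist (c k) y) ^ (-κ)))]
                refine setLIntegral_mono ((hkermeas' y).ennreal_ofReal) fun z hz => ?_
                have hzy0 : 0 < dist z y :=
                  dist_pos.mpr fun hzy => hy (hzy ▸ hBsBb k hz)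
                have hzup : dist z y ≤ 3/2 * dist (c k) y := by
                  have htri : dist z y ≤ dist z (c k) + dist (c k) y := dist_triangle _ _ _
                  have hzc : dist z (c k) < η k := Metric.mem_ball.mp hz
                  linarith
                exact ENNReal.ofReal_le_ofReal (hrpow_anti _ _ hzy0 hzup)
              have hball_low : ENNReal.ofReal (c₁ * η k ^ Q) ≤ m (Bs k) :=
                (hAB (c k) (η k) hηk (by linarith [hηD k hrk])).1
              have hreal : η k ^ Q * dist (c k) y ^ (-κ) =
                  ((3/2 : ℝ) ^ κ / c₁) *
                    ((c₁ * η k ^ Q) * ((3/2 * dist (c k) y) ^ (-κ))) := by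
                have he1 : (3/2 * dist (c k) y) ^ (-κ) =
                    (3/2:ℝ) ^ (-κ) * dist (c k) y ^ (-κ) :=
                  Real.mul_rpow (by norm_num) dist_nonneg
                have he3 : (3/2:ℝ) ^ (-κ) = ((3/2:ℝ) ^ κ)⁻¹ :=
                  Real.rpow_neg (by norm_num) κ
                have h32 : (0:ℝ) < (3/2:ℝ) ^ κ := Real.rpow_pos_of_pos (by norm_num) κ
                have h1 : c₁ ≠ 0 := hc₁.ne'
                have h2 : ((3/2:ℝ) ^ κ) ≠ 0 := h32.ne'
                rw [he1, he3]
                field_simp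
              have he : ENNReal.ofReal (η k ^ Q) * ENNReal.ofReal (dist (c k) y ^ (-κ)) =
                  ENNReal.ofReal ((3/2 : ℝ) ^ κ / c₁) *
                    (ENNReal.ofReal (c₁ * η k ^ Q) *
                      ENNReal.ofReal ((3/2 * dist (c k) y) ^ (-κ))) := by
                rw [← ENNReal.ofReal_mul (Real.rpow_nonneg (hη0 k) Q),
                  ← ENNReal.ofReal_mul (mul_nonneg hc₁.le (Real.rpow_nonneg (hη0 k) Q)),
                  ← ENNReal.ofReal_mul
                    (div_nonneg (Real.rpow_nonneg (by norm_num) κ) hc₁.le),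
                  hreal]
              calc ENNReal.ofReal (η k ^ Q) * ENNReal.ofReal (dist (c k) y ^ (-κ))
                  = ENNReal.ofReal ((3/2 : ℝ) ^ κ / c₁) *
                    (ENNReal.ofReal (c₁ * η k ^ Q) *
                      ENNReal.ofReal ((3/2 * dist (c k) y) ^ (-κ))) := he
                _ ≤ ENNReal.ofReal ((3/2 : ℝ) ^ κ / c₁) *
                    (m (Bs k) * ENNReal.ofReal ((3/2 * dist (c k) y) ^ (-κ))) :=
                    mul_le_mul_right (mul_le_mul_left hball_low _) _
                _ = ENNReal.ofReal ((3/2 : ℝ) ^ κ / c₁) *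
                    (ENNReal.ofReal ((3/2 * dist (c k) y) ^ (-κ)) * m (Bs k)) := by
                    rw [mul_comm (m (Bs k)) _]
                _ ≤ ENNReal.ofReal ((3/2 : ℝ) ^ κ / c₁) *
                    ∫⁻ z in Bs k, ENNReal.ofReal (dist z y ^ (-κ)) ∂m :=
                    mul_le_mul_right hlow _
        calc G y ≤ ∑' k, ENNReal.ofReal ((3/2 : ℝ) ^ κ / c₁) *
              ∫⁻ z in Bs k, ENNReal.ofReal (dist z y ^ (-κ)) ∂m := ENNReal.tsum_le_tsum hterm
          _ = ENNReal.ofReal ((3/2 : ℝ) ^ κ / c₁) *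
              ∑' k, ∫⁻ z in Bs k, ENNReal.ofReal (dist z y ^ (-κ)) ∂m := ENNReal.tsum_mul_left
          _ ≤ ENNReal.ofReal ((3/2 : ℝ) ^ κ / c₁) *
              ∫⁻ z, ENNReal.ofReal (dist z y ^ (-κ)) ∂m :=
              mul_le_mul_right (tsum_setLIntegral_le (fun k => measurableSet_ball) hdisjBs
                ((hkermeas' y).ennreal_ofReal).aemeasurable) _
          _ ≤ CG := by rw [hCGdef]; exact mul_le_mul_right (hCw' y) _
      -- integral of G
      have hgt'int : ∀ k, ∫⁻ y, gt' k y ∂m ≤ Cw := by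
        intro k
        refine le_trans (lintegral_mono fun y => ?_) (hCw (c k))
        rw [hgt'def]
        exact Set.indicator_le_self _ _ y
      have hGint : ∫⁻ y, G y ∂m ≤ Cw * S := by
        simp only [hGdef]
        rw [lintegral_tsum fun k => ((hgt'meas k).const_mul (u k)).aemeasurable]
        calc ∑' k, ∫⁻ y, u k * gt' k y ∂m
            = ∑' k, u k * ∫⁻ y, gt' k y ∂m :=
              tsum_congr fun k => lintegral_const_mul' _ _ (hutop k)
          _ ≤ ∑' k, u k * Cw := ENNReal.tsum_le_tsum fun k => mul_le_mul_right (hgt'int k) _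
          _ = ∑' k, Cw * u k := tsum_congr fun k => mul_comm _ _
          _ = Cw * S := by rw [hSdef, ENNReal.tsum_mul_left]
      -- S is finite
      have hofc₁ : ENNReal.ofReal c₁ ≠ 0 := by
        rw [Ne, ENNReal.ofReal_eq_zero]; linarith
      have hSfin : S ≠ ⊤ := by
        intro hS
        have huw : ∀ k, ENNReal.ofReal c₁ * u k ≤ m (Bs k) := by
          intro k
          by_cases hgk : good k
          · rw [hudef]; simp only [if_pos hgk, mul_zero]; exact zero_le
          · rw [hudef]; simp only [if_neg hgk]
            have hrk := hbadr k hgk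
            simp only [hwdef]
            rw [← ENNReal.ofReal_mul hc₁.le]
            exact (hAB (c k) (η k) (hT k hrk) (by linarith [hηD k hrk])).1
        have hS1 : ENNReal.ofReal c₁ * S ≤ m Set.univ := by
          rw [hSdef, ← ENNReal.tsum_mul_left]
          calc ∑' k, ENNReal.ofReal c₁ * u k ≤ ∑' k, m (Bs k) := ENNReal.tsum_le_tsum huw
            _ = m (⋃ k, Bs k) := (measure_iUnion hdisjBs fun k => measurableSet_ball).symm
            _ ≤ m Set.univ := measure_mono (Set.subset_univ _)
        rw [hS, ENNReal.mul_top hofc₁] at hS1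
        exact absurd (lt_of_le_of_lt hS1 hMX) (lt_irrefl ⊤)
      -- lower bound for θ * S
      have hlowS : θ * S ≤ ENNReal.ofReal (2 ^ κ) * ∫⁻ y, G y * F y ∂m := by
        have h1 : ∀ k, θ * u k ≤
            ENNReal.ofReal (2 ^ κ) * (u k * ∫⁻ y, gt' k y * F y ∂m) := by
          intro k
          by_cases hgk : good k
          · rw [hudef]; simp only [if_pos hgk, mul_zero]; exact zero_le
          · rw [hudef]; simp only [if_neg hgk]
            calc θ * w k ≤ (ENNReal.ofReal (2 ^ κ) * ∫⁻ y, gt' k y * F y ∂m) * w k :=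
                mul_le_mul_left (hbadTk k hgk) _
              _ = ENNReal.ofReal (2 ^ κ) * (w k * ∫⁻ y, gt' k y * F y ∂m) := by ring
        calc θ * S = ∑' k, θ * u k := by rw [hSdef, ENNReal.tsum_mul_left]
          _ ≤ ∑' k, ENNReal.ofReal (2 ^ κ) * (u k * ∫⁻ y, gt' k y * F y ∂m) :=
              ENNReal.tsum_le_tsum h1
          _ = ENNReal.ofReal (2 ^ κ) * ∑' k, u k * ∫⁻ y, gt' k y * F y ∂m :=
              ENNReal.tsum_mul_left
          _ = ENNReal.ofReal (2 ^ κ) * ∑' k, ∫⁻ y, u k * (gt' k y * F y) ∂m := by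
              congr 1
              exact tsum_congr fun k => (lintegral_const_mul' _ _ (hutop k)).symm
          _ = ENNReal.ofReal (2 ^ κ) * ∫⁻ y, ∑' k, u k * (gt' k y * F y) ∂m := by
              congr 1
              exact (lintegral_tsum fun k =>
                (((hgt'meas k).aemeasurable.mul hF_aem).const_mul (u k))).symm
          _ = ENNReal.ofReal (2 ^ κ) * ∫⁻ y, G y * F y ∂m := by
              congr 1
              refine lintegral_congr fun y => ?_
              simp only [hGdef]
              rw [← ENNReal.tsum_mul_right]
              exact tsum_congr fun k => by ring
      -- Hölder
      have hconj : Real.HolderConjugate p' p := by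
        refine ⟨?_, by linarith, hp0⟩
        rw [inv_one, inv_eq_one_div, inv_eq_one_div]; linarith
      have hG_Fp : ∫⁻ y, G y * F y ∂m ≤ (KK * S) ^ (1/p') * Np ^ (1/p) := by
        have hGpint : ∫⁻ y, G y ^ p' ∂m ≤ KK * S := by
          have hpt : ∀ y, G y ^ p' ≤ CG ^ (p' - 1) * G y := by
            intro y
            rcases eq_or_ne (G y) 0 with h | h
            · rw [h, ENNReal.zero_rpow_of_pos (by linarith)]; exact zero_le
            · have hne : G y ≠ ⊤ :=
                (lt_of_le_of_lt (hGle y) (lt_top_iff_ne_top.mpr hCGtop)).ne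
              have he : G y ^ p' = G y ^ (p' - 1) * G y := by
                conv_lhs => rw [show p' = (p' - 1) + 1 by ring]
                rw [ENNReal.rpow_add _ _ h hne, ENNReal.rpow_one]
              rw [he]
              exact mul_le_mul_left (ENNReal.rpow_le_rpow (hGle y) (by linarith)) _
          calc ∫⁻ y, G y ^ p' ∂m ≤ ∫⁻ y, CG ^ (p' - 1) * G y ∂m := lintegral_mono hpt
            _ = CG ^ (p' - 1) * ∫⁻ y, G y ∂m :=
                lintegral_const_mul' _ _
                  (ENNReal.rpow_lt_top_of_nonneg (by linarith) hCGtop).ne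
            _ ≤ CG ^ (p' - 1) * (Cw * S) := mul_le_mul_right hGint _
            _ = KK * S := by rw [hKKdef]; ring
        have hH := ENNReal.lintegral_mul_le_Lp_mul_Lq m hconj hGmeas.aemeasurable hF_aem
        calc ∫⁻ y, G y * F y ∂m = ∫⁻ y, (G * F) y ∂m := rfl
          _ ≤ (∫⁻ y, G y ^ p' ∂m) ^ (1/p') * (∫⁻ y, F y ^ p ∂m) ^ (1/p) := hH
          _ ≤ (KK * S) ^ (1/p') * Np ^ (1/p) := by
              rw [hNpdef]
              exact mul_le_mul_left (ENNReal.rpow_le_rpow hGpint (by positivity)) _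
      -- solve for S
      have hSbound : S ≤ CS * Np := by
        rcases eq_or_ne S 0 with h | hS0
        · rw [h]; exact zero_le
        · have hkey : S ≤ S ^ (1/p') * (c₃ * KK ^ (1/p') * Np ^ (1/p)) := by
            have h1 : S = θ⁻¹ * (θ * S) := by
              rw [← mul_assoc, ENNReal.inv_mul_cancel hθ0 hθtop, one_mul]
            calc S = θ⁻¹ * (θ * S) := h1
              _ ≤ θ⁻¹ * (ENNReal.ofReal (2 ^ κ) * ((KK * S) ^ (1/p') * Np ^ (1/p))) :=
                  mul_le_mul_right (le_trans hlowS (mul_le_mul_right hG_Fp _)) _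
              _ = S ^ (1/p') * (c₃ * KK ^ (1/p') * Np ^ (1/p)) := by
                  rw [hc₃def, ENNReal.mul_rpow_of_nonneg _ _ (by positivity : (0:ℝ) ≤ 1/p')]
                  ring
          have hS1p' : S ^ (1/p') ≠ 0 := by
            rw [Ne, ENNReal.rpow_eq_zero_iff]
            rintro (⟨h, _⟩ | ⟨h, _⟩)
            · exact hS0 h
            · exact hSfin h
          have hS1p'top : S ^ (1/p') ≠ ⊤ := by
            rw [Ne, ENNReal.rpow_eq_top_iff]
            rintro (⟨h, hlt⟩ | ⟨h, _⟩)
            · exact absurd hlt (not_lt.mpr (by positivity))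
            · exact hSfin h
          have hsplitS : S = S ^ (1/p') * S ^ (1/p) := by
            rw [← ENNReal.rpow_add _ _ hS0 hSfin]
            have h1 : 1/p' + 1/p = 1 := by linarith
            rw [h1, ENNReal.rpow_one]
          have hcancel : S ^ (1/p) ≤ c₃ * KK ^ (1/p') * Np ^ (1/p) := by
            have h2 : S ^ (1/p') * S ^ (1/p) ≤
                S ^ (1/p') * (c₃ * KK ^ (1/p') * Np ^ (1/p)) := by
              rw [← hsplitS]; exact hkey
            exact (ENNReal.mul_le_mul_iff_right hS1p' hS1p'top).mp h2
          calc S = (S ^ (1/p)) ^ p := by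
                rw [← ENNReal.rpow_mul, one_div_mul_cancel hp0.ne', ENNReal.rpow_one]
            _ ≤ (c₃ * KK ^ (1/p') * Np ^ (1/p)) ^ p := ENNReal.rpow_le_rpow hcancel hp0.le
            _ = CS * Np := by
                rw [ENNReal.mul_rpow_of_nonneg _ _ hp0.le, ← ENNReal.rpow_mul Np,
                  one_div_mul_cancel hp0.ne', ENNReal.rpow_one, hCSdef]
      -- bad capacity bound
      have hbadcap : ∀ k, ¬ good k → capacity m (rieszKernel Q s) p (E k) ≤
          ENNReal.ofReal (C₂' * 2 ^ Q) * w k := by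
        intro k hgk
        have hrk := hbadr k hgk
        refine (hcapm k hrk).trans ?_
        have h2η : (0:ℝ) < 2 * η k := by linarith [hT k hrk]
        refine (hupper (c k) (2 * η k) h2η (by linarith [hηD k hrk, hD0])).trans ?_
        simp only [hwdef]
        rw [← ENNReal.ofReal_mul (by positivity)]
        refine ENNReal.ofReal_le_ofReal (le_of_eq ?_)
        rw [Real.mul_rpow (by norm_num) (hη0 k)]
        ring
      -- per-index bound and summation
      have hper : ∀ k, capacity m (rieszKernel Q s) p (E k) ≤
          ENNReal.ofReal 2 ^ p * ∫⁻ y in Bb k, F y ^ p ∂m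
            + ENNReal.ofReal (C₂' * 2 ^ Q) * u k := by
        intro k
        by_cases hgk : good k
        · exact le_trans (hgood k hgk) le_self_add
        · refine le_trans ?_ le_add_self
          rw [hudef]; simp only [if_neg hgk]
          exact hbadcap k hgk
      have hFp_aem : AEMeasurable (fun y => F y ^ p) m := hF_aem.pow_const p
      calc ∑' k, capacity m (rieszKernel Q s) p (E k)
          ≤ ∑' k, (ENNReal.ofReal 2 ^ p * ∫⁻ y in Bb k, F y ^ p ∂m
              + ENNReal.ofReal (C₂' * 2 ^ Q) * u k) := ENNReal.tsum_le_tsum hper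
        _ = ENNReal.ofReal 2 ^ p * ∑' k, ∫⁻ y in Bb k, F y ^ p ∂m
            + ENNReal.ofReal (C₂' * 2 ^ Q) * S := by
            rw [ENNReal.tsum_add, ENNReal.tsum_mul_left, ENNReal.tsum_mul_left, hSdef]
        _ ≤ ENNReal.ofReal 2 ^ p * Np + ENNReal.ofReal (C₂' * 2 ^ Q) * (CS * Np) := by
            refine add_le_add (mul_le_mul_right ?_ _) (mul_le_mul_right hSbound _)
            rw [hNpdef]
            exact tsum_setLIntegral_le (fun k => measurableSet_ball) hdisjBb hFp_aem
        _ = A₀ * Np := by rw [hA₀def]; ring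
        _ ≤ A₀ * b := mul_le_mul_right hNp_lt.le _
    -- conclude from the main estimate
    rcases eq_top_or_lt_top (capacity m (rieszKernel Q s) p (⋃ k, E k)) with ht | ht
    · rw [ht, ENNReal.mul_top hA0]
      exact le_top
    · refine ENNReal.le_of_forall_pos_le_add fun ε hε _ => ?_
      have hεA : ((ε : ℝ≥0∞) * (A₀ + 2)⁻¹) ≠ 0 := by
        refine mul_ne_zero ?_ ?_
        · exact_mod_cast hε.ne'
        · rw [Ne, ENNReal.inv_eq_zero]; exact hAne
      have hb : capacity m (rieszKernel Q s) p (⋃ k, E k) <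
          capacity m (rieszKernel Q s) p (⋃ k, E k) + (ε : ℝ≥0∞) * (A₀ + 2)⁻¹ :=
        ENNReal.lt_add_right ht.ne hεA
      have hbne : capacity m (rieszKernel Q s) p (⋃ k, E k) + (ε : ℝ≥0∞) * (A₀ + 2)⁻¹ ≠ ⊤ := by
        refine ENNReal.add_ne_top.mpr ⟨ht.ne, ?_⟩
        exact ENNReal.mul_ne_top ENNReal.coe_ne_top (by rw [Ne, ENNReal.inv_eq_top]; exact hA0)
      calc ∑' k, capacity m (rieszKernel Q s) p (E k)
          ≤ A₀ * (capacity m (rieszKernel Q s) p (⋃ k, E k) + (ε : ℝ≥0∞) * (A₀ + 2)⁻¹) :=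
            main _ hb hbne
        _ ≤ (A₀ + 2) * (capacity m (rieszKernel Q s) p (⋃ k, E k) + (ε : ℝ≥0∞) * (A₀ + 2)⁻¹) :=
            mul_le_mul_left le_self_add _
        _ = (A₀ + 2) * capacity m (rieszKernel Q s) p (⋃ k, E k)
            + (A₀ + 2) * ((A₀ + 2)⁻¹ * (ε : ℝ≥0∞)) := by
            rw [mul_add, mul_comm ((ε : ℝ≥0∞)) _]
        _ = (A₀ + 2) * capacity m (rieszKernel Q s) p (⋃ k, E k) + (ε : ℝ≥0∞) := by
            rw [← mul_assoc, ENNReal.mul_inv_cancel hA0 hAne, one_mul]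

end
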